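/- Let ℓ : ℤ³ → ℤ³ be the automorphism ℓ(u,v,w) = (u,v,-w). The number of subgroups Δ of index n in ℤ³ with ℓ(Δ) = Δ equals σ₂(n) + 3·σ₂(n/2), where σ₂(n) = Σ_{ab | factorizations abc = n} a and σ₂(n/2) = 0 if n is odd. -/

import Mathlib

/-- `sigma2 n = ∑_{a*b*c = n} a`, summing over ordered triples of positive integers. -/
def sigma2 (n : ℕ) : ℕ :=
  ∑ t ∈ (Finset.range (n+1) ×ˢ Finset.range (n+1) ×ˢ Finset.range (n+1)).filter
      (fun t => 0 < t.1 ∧ 0 < t.2.1 ∧ 0 < t.2.2 ∧ t.1 * t.2.1 * t.2.2 = n),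
    t.1

/-- The automorphism `ℓ(u, v, w) = (u, v, -w)` of `ℤ³`, as an additive monoid hom. -/
def ell3 : ℤ × ℤ × ℤ →+ ℤ × ℤ × ℤ :=
  (AddMonoidHom.id ℤ).prodMap ((AddMonoidHom.id ℤ).prodMap negAddMonoidHom)

open Finset

lemma ell3_apply (p : ℤ × ℤ × ℤ) : ell3 p = (p.1, p.2.1, -p.2.2) := rfl

section helpers

lemma small_mul_eq_zero {z C t : ℤ} (hC : 0 < C) (h1 : -C < t) (h2 : t < C)
    (h : t = z * C) : z = 0 := by
  rcases lt_trichotomy z 0 with hz | hz | hz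
  · nlinarith [mul_nonneg (by omega : (0:ℤ) ≤ -z - 1) hC.le]
  · exact hz
  · nlinarith [mul_nonneg (by omega : (0:ℤ) ≤ z - 1) hC.le]

lemma pos_unit {x x' a a' : ℤ} (ha : 0 < a) (ha' : 0 < a') (h : a = x * a')
    (h' : a' = x' * a) : a = a' ∧ x = 1 := by
  have hxx : (x * x') * a = 1 * a := by
    have : a = (x * x') * a := by
      calc a = x * a' := h
        _ = x * (x' * a) := by rw [h']
        _ = (x * x') * a := by ring
    linarith
  have hx1 : x * x' = 1 := mul_right_cancel₀ ha.ne' hxx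
  rcases Int.isUnit_iff.mp (IsUnit.of_mul_eq_one _ hx1) with rfl | rfl
  · exact ⟨by simpa using h, rfl⟩
  · exfalso; rw [h'] at ha'; nlinarith

end helpers

def Delta (a b w1 d w2 c : ℤ) : AddSubgroup (ℤ × ℤ × ℤ) where
  carrier := {p | ∃ x y z : ℤ, p.1 = x*a ∧ p.2.1 = x*b + y*d ∧ p.2.2 = x*w1 + y*w2 + z*c}
  zero_mem' := ⟨0, 0, 0, by norm_num⟩
  add_mem' := by
    rintro p q ⟨x, y, z, h1, h2, h3⟩ ⟨x', y', z', h1', h2', h3'⟩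
    refine ⟨x + x', y + y', z + z', ?_, ?_, ?_⟩ <;>
      simp only [Prod.fst_add, Prod.snd_add, h1, h2, h3, h1', h2', h3'] <;> ring
  neg_mem' := by
    rintro p ⟨x, y, z, h1, h2, h3⟩
    refine ⟨-x, -y, -z, ?_, ?_, ?_⟩ <;>
      simp only [Prod.fst_neg, Prod.snd_neg, h1, h2, h3] <;> ring

lemma mem_Delta {a b w1 d w2 c : ℤ} {p : ℤ × ℤ × ℤ} :
    p ∈ Delta a b w1 d w2 c ↔
      ∃ x y z : ℤ, p.1 = x*a ∧ p.2.1 = x*b + y*d ∧ p.2.2 = x*w1 + y*w2 + z*c := Iff.rfl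

lemma Delta_map (a b w1 d w2 c : ℤ) (h1 : c ∣ 2*w1) (h2 : c ∣ 2*w2) :
    (Delta a b w1 d w2 c).map ell3 = Delta a b w1 d w2 c := by
  obtain ⟨k1, hk1⟩ := h1
  obtain ⟨k2, hk2⟩ := h2
  ext p
  constructor
  · rintro ⟨q, ⟨x, y, z, hq1, hq2, hq3⟩, rfl⟩
    refine ⟨x, y, -x*k1 - y*k2 - z, by simpa [ell3_apply] using hq1, by simpa [ell3_apply] using hq2, ?_⟩
    show -q.2.2 = _
    linear_combination (-1)*hq3 + (-x)*hk1 + (-y)*hk2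
  · rintro ⟨x, y, z, hp1, hp2, hp3⟩
    refine ⟨(p.1, p.2.1, -p.2.2), ⟨x, y, -x*k1 - y*k2 - z, by simpa using hp1,
      by simpa using hp2, by linear_combination (-1)*hp3 + (-x)*hk1 + (-y)*hk2⟩, ?_⟩
    rw [ell3_apply]
    simp

lemma ell3_mem {H : AddSubgroup (ℤ × ℤ × ℤ)} (hH : H.map ell3 = H) {p : ℤ × ℤ × ℤ}
    (hp : p ∈ H) : (p.1, p.2.1, -p.2.2) ∈ H := by
  have : ell3 p ∈ H.map ell3 := AddSubgroup.mem_map_of_mem _ hp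
  rwa [hH, ell3_apply] at this

lemma Delta_inj {A D C A' D' C' b w1 w2 b' w1' w2' : ℕ}
    (hA : 0 < A) (hD : 0 < D) (hC : 0 < C) (hA' : 0 < A') (hD' : 0 < D') (hC' : 0 < C')
    (hb : b < D) (hw1 : w1 < C) (hw2 : w2 < C)
    (hb' : b' < D') (hw1' : w1' < C') (hw2' : w2' < C')
    (h : Delta (A:ℤ) (b:ℤ) (w1:ℤ) (D:ℤ) (w2:ℤ) (C:ℤ)
        = Delta (A':ℤ) (b':ℤ) (w1':ℤ) (D':ℤ) (w2':ℤ) (C':ℤ)) :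
    A = A' ∧ D = D' ∧ C = C' ∧ b = b' ∧ w1 = w1' ∧ w2 = w2' := by
  have hA0 : (0:ℤ) < A := by exact_mod_cast hA
  have hD0 : (0:ℤ) < D := by exact_mod_cast hD
  have hC0 : (0:ℤ) < C := by exact_mod_cast hC
  have hA0' : (0:ℤ) < A' := by exact_mod_cast hA'
  have hD0' : (0:ℤ) < D' := by exact_mod_cast hD'
  have hC0' : (0:ℤ) < C' := by exact_mod_cast hC'
  -- memberships of generators
  have m1 : ((A:ℤ), (b:ℤ), (w1:ℤ)) ∈ Delta (A':ℤ) (b':ℤ) (w1':ℤ) (D':ℤ) (w2':ℤ) (C':ℤ) := by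
    rw [← h]; exact ⟨1, 0, 0, by simp, by simp, by simp⟩
  have m2 : ((0:ℤ), (D:ℤ), (w2:ℤ)) ∈ Delta (A':ℤ) (b':ℤ) (w1':ℤ) (D':ℤ) (w2':ℤ) (C':ℤ) := by
    rw [← h]; exact ⟨0, 1, 0, by simp, by simp, by simp⟩
  have m3 : ((0:ℤ), (0:ℤ), (C:ℤ)) ∈ Delta (A':ℤ) (b':ℤ) (w1':ℤ) (D':ℤ) (w2':ℤ) (C':ℤ) := by
    rw [← h]; exact ⟨0, 0, 1, by simp, by simp, by simp⟩
  have m1' : ((A':ℤ), (b':ℤ), (w1':ℤ)) ∈ Delta (A:ℤ) (b:ℤ) (w1:ℤ) (D:ℤ) (w2:ℤ) (C:ℤ) := by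
    rw [h]; exact ⟨1, 0, 0, by simp, by simp, by simp⟩
  have m2' : ((0:ℤ), (D':ℤ), (w2':ℤ)) ∈ Delta (A:ℤ) (b:ℤ) (w1:ℤ) (D:ℤ) (w2:ℤ) (C:ℤ) := by
    rw [h]; exact ⟨0, 1, 0, by simp, by simp, by simp⟩
  have m3' : ((0:ℤ), (0:ℤ), (C':ℤ)) ∈ Delta (A:ℤ) (b:ℤ) (w1:ℤ) (D:ℤ) (w2:ℤ) (C:ℤ) := by
    rw [h]; exact ⟨0, 0, 1, by simp, by simp, by simp⟩
  -- C = C'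
  obtain ⟨x3, y3, z3, e31, e32, e33⟩ := m3
  obtain ⟨x3', y3', z3', e31', e32', e33'⟩ := m3'
  simp only at e31 e32 e33 e31' e32' e33'
  have hx3 : x3 = 0 := by
    rcases mul_eq_zero.mp e31.symm with h' | h'
    · exact h'
    · exact absurd h' hA0'.ne'
  have hy3 : y3 = 0 := by
    rw [hx3] at e32
    rcases mul_eq_zero.mp (by linarith : y3 * (D':ℤ) = 0) with h' | h'
    · exact h'
    · exact absurd h' hD0'.ne'
  have hx3' : x3' = 0 := by
    rcases mul_eq_zero.mp e31'.symm with h' | h'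
    · exact h'
    · exact absurd h' hA0.ne'
  have hy3' : y3' = 0 := by
    rw [hx3'] at e32'
    rcases mul_eq_zero.mp (by linarith : y3' * (D:ℤ) = 0) with h' | h'
    · exact h'
    · exact absurd h' hD0.ne'
  have eC : (C:ℤ) = z3 * C' := by rw [hx3, hy3] at e33; linarith
  have eC' : (C':ℤ) = z3' * C := by rw [hx3', hy3'] at e33'; linarith
  obtain ⟨hCC, hz3⟩ := pos_unit hC0 hC0' eC eC'
  -- D = D' and w2 = w2'
  obtain ⟨x2, y2, z2, e21, e22, e23⟩ := m2
  obtain ⟨x2', y2', z2', e21', e22', e23'⟩ := m2'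
  simp only at e21 e22 e23 e21' e22' e23'
  have hx2 : x2 = 0 := by
    rcases mul_eq_zero.mp e21.symm with h' | h'
    · exact h'
    · exact absurd h' hA0'.ne'
  have hx2' : x2' = 0 := by
    rcases mul_eq_zero.mp e21'.symm with h' | h'
    · exact h'
    · exact absurd h' hA0.ne'
  have eD : (D:ℤ) = y2 * D' := by rw [hx2] at e22; linarith
  have eD' : (D':ℤ) = y2' * D := by rw [hx2'] at e22'; linarith
  obtain ⟨hDD, hy2⟩ := pos_unit hD0 hD0' eD eD'
  have ew2 : (w2:ℤ) = w2' + z2 * C' := by rw [hx2, hy2] at e23; linarith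
  have hz2 : z2 = 0 := by
    refine small_mul_eq_zero hC0' ?_ ?_ (show (w2:ℤ) - w2' = z2 * C' by linarith)
    · have : (w2':ℤ) < C' := by exact_mod_cast hw2'
      have : (0:ℤ) ≤ w2 := Int.natCast_nonneg w2
      linarith
    · have : (w2:ℤ) < C := by exact_mod_cast hw2
      have : (0:ℤ) ≤ w2' := Int.natCast_nonneg w2'
      rw [hCC] at *
      linarith
  have hww2 : (w2:ℤ) = w2' := by rw [hz2] at ew2; linarith
  -- A = A', b = b', w1 = w1'
  obtain ⟨x1, y1, z1, e11, e12, e13⟩ := m1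
  obtain ⟨x1', y1', z1', e11', e12', e13'⟩ := m1'
  simp only at e11 e12 e13 e11' e12' e13'
  obtain ⟨hAA, hx1⟩ := pos_unit hA0 hA0' e11 e11'
  have eb : (b:ℤ) = b' + y1 * D' := by rw [hx1] at e12; linarith
  have hy1 : y1 = 0 := by
    refine small_mul_eq_zero hD0' ?_ ?_ (show (b:ℤ) - b' = y1 * D' by linarith)
    · have : (b':ℤ) < D' := by exact_mod_cast hb'
      have : (0:ℤ) ≤ b := Int.natCast_nonneg b
      linarith
    · have : (b:ℤ) < D := by exact_mod_cast hb
      have : (0:ℤ) ≤ b' := Int.natCast_nonneg b'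
      rw [hDD] at *
      linarith
  have ew1 : (w1:ℤ) = w1' + z1 * C' := by rw [hx1, hy1] at e13; linarith
  have hz1 : z1 = 0 := by
    refine small_mul_eq_zero hC0' ?_ ?_ (show (w1:ℤ) - w1' = z1 * C' by linarith)
    · have : (w1':ℤ) < C' := by exact_mod_cast hw1'
      have : (0:ℤ) ≤ w1 := Int.natCast_nonneg w1
      linarith
    · have : (w1:ℤ) < C := by exact_mod_cast hw1
      have : (0:ℤ) ≤ w1' := Int.natCast_nonneg w1'
      rw [hCC] at *
      linarith
  have hww1 : (w1:ℤ) = w1' := by rw [hz1] at ew1; linarith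
  refine ⟨by exact_mod_cast hAA, by exact_mod_cast hDD, by exact_mod_cast hCC,
    ?_, by exact_mod_cast hww1, by exact_mod_cast hww2⟩
  have : (b:ℤ) = b' := by rw [hy1] at eb; linarith
  exact_mod_cast this

lemma Delta_index (A D C : ℕ) (hA : 0 < A) (hD : 0 < D) (hC : 0 < C) (b w1 w2 : ℤ) :
    (Delta (A:ℤ) b w1 (D:ℤ) w2 (C:ℤ)).index = A * D * C := by
  haveI : NeZero A := ⟨hA.ne'⟩
  haveI : NeZero D := ⟨hD.ne'⟩
  haveI : NeZero C := ⟨hC.ne'⟩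
  have hA0 : (A:ℤ) ≠ 0 := by exact_mod_cast hA.ne'
  have hD0 : (D:ℤ) ≠ 0 := by exact_mod_cast hD.ne'
  set Δ := Delta (A:ℤ) b w1 (D:ℤ) w2 (C:ℤ) with hΔ
  set f : ℤ × ℤ × ℤ → ZMod A × ZMod D × ZMod C := fun p =>
    ((p.1 : ZMod A), ((p.2.1 - b * (p.1 / (A:ℤ)) : ℤ) : ZMod D),
      ((p.2.2 - w1 * (p.1 / (A:ℤ)) - w2 * ((p.2.1 - b * (p.1 / (A:ℤ))) / (D:ℤ)) : ℤ) : ZMod C))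
    with hf
  have hresp : ∀ p q : ℤ × ℤ × ℤ, -p + q ∈ Δ → f p = f q := by
    rintro p q ⟨x, y, z, h1, h2, h3⟩
    simp only [Prod.fst_add, Prod.snd_add, Prod.fst_neg, Prod.snd_neg] at h1 h2 h3
    have e1 : q.1 = p.1 + x * (A:ℤ) := by linarith
    have ed1 : q.1 / (A:ℤ) = p.1 / (A:ℤ) + x := by
      rw [e1, Int.add_mul_ediv_right _ _ hA0]
    have e2 : q.2.1 - b * (q.1 / (A:ℤ)) = (p.2.1 - b * (p.1 / (A:ℤ))) + y * (D:ℤ) := by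
      linear_combination h2 - b * ed1
    have ed2 : (q.2.1 - b * (q.1 / (A:ℤ))) / (D:ℤ) = (p.2.1 - b * (p.1 / (A:ℤ))) / (D:ℤ) + y := by
      rw [e2, Int.add_mul_ediv_right _ _ hD0]
    have e3 : q.2.2 - w1 * (q.1 / (A:ℤ)) - w2 * ((q.2.1 - b * (q.1 / (A:ℤ))) / (D:ℤ)) =
        (p.2.2 - w1 * (p.1 / (A:ℤ)) - w2 * ((p.2.1 - b * (p.1 / (A:ℤ))) / (D:ℤ))) + z * (C:ℤ) := by
      linear_combination h3 - w1 * ed1 - w2 * ed2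
    simp only [hf]
    rw [Prod.mk.injEq, Prod.mk.injEq]
    refine ⟨?_, ?_, ?_⟩
    · exact (ZMod.intCast_eq_intCast_iff _ _ _).mpr
        (Int.modEq_iff_dvd.mpr ⟨x, by linarith⟩)
    · exact (ZMod.intCast_eq_intCast_iff _ _ _).mpr
        (Int.modEq_iff_dvd.mpr ⟨y, by linear_combination e2⟩)
    · exact (ZMod.intCast_eq_intCast_iff _ _ _).mpr
        (Int.modEq_iff_dvd.mpr ⟨z, by linear_combination e3⟩)
  set F : ((ℤ × ℤ × ℤ) ⧸ Δ) → ZMod A × ZMod D × ZMod C :=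
    Quotient.lift f (fun p q h => hresp p q ((QuotientAddGroup.leftRel_apply).mp h)) with hF
  have hFmk : ∀ p : ℤ × ℤ × ℤ, F (QuotientAddGroup.mk p) = f p := fun p => rfl
  have hinj : Function.Injective F := by
    intro P Q
    induction P using QuotientAddGroup.induction_on with | H p => ?_
    induction Q using QuotientAddGroup.induction_on with | H q => ?_
    intro h
    rw [hFmk, hFmk, hf] at h
    simp only [Prod.mk.injEq] at h
    obtain ⟨h1, h2, h3⟩ := h
    rw [QuotientAddGroup.eq]
    obtain ⟨x, hx⟩ : (A:ℤ) ∣ q.1 - p.1 := Int.ModEq.dvd ((ZMod.intCast_eq_intCast_iff _ _ _).mp h1)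
    have ed1 : q.1 / (A:ℤ) = p.1 / (A:ℤ) + x := by
      have e : q.1 = p.1 + x * (A:ℤ) := by linarith
      rw [e, Int.add_mul_ediv_right _ _ hA0]
    obtain ⟨y, hy⟩ : (D:ℤ) ∣ (q.2.1 - b * (q.1 / (A:ℤ))) - (p.2.1 - b * (p.1 / (A:ℤ))) :=
      Int.ModEq.dvd ((ZMod.intCast_eq_intCast_iff _ _ _).mp h2)
    have ed2 : (q.2.1 - b * (q.1 / (A:ℤ))) / (D:ℤ) = (p.2.1 - b * (p.1 / (A:ℤ))) / (D:ℤ) + y := by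
      have e : q.2.1 - b * (q.1 / (A:ℤ)) = (p.2.1 - b * (p.1 / (A:ℤ))) + y * (D:ℤ) := by linarith
      rw [e, Int.add_mul_ediv_right _ _ hD0]
    obtain ⟨z, hz⟩ : (C:ℤ) ∣ (q.2.2 - w1 * (q.1 / (A:ℤ)) - w2 * ((q.2.1 - b * (q.1 / (A:ℤ))) / (D:ℤ)))
        - (p.2.2 - w1 * (p.1 / (A:ℤ)) - w2 * ((p.2.1 - b * (p.1 / (A:ℤ))) / (D:ℤ))) :=
      Int.ModEq.dvd ((ZMod.intCast_eq_intCast_iff _ _ _).mp h3)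
    refine ⟨x, y, z, ?_, ?_, ?_⟩
    · show -p.1 + q.1 = x * (A:ℤ)
      linarith
    · show -p.2.1 + q.2.1 = x * b + y * (D:ℤ)
      linear_combination hy + b * ed1
    · show -p.2.2 + q.2.2 = x * w1 + y * w2 + z * (C:ℤ)
      linear_combination hz + w1 * ed1 + w2 * ed2
  have hsurj : Function.Surjective F := by
    rintro ⟨i, j, k⟩
    refine ⟨QuotientAddGroup.mk ((i.val : ℤ), (j.val : ℤ), (k.val : ℤ)), ?_⟩
    rw [hFmk, hf]
    have e1 : ((i.val : ℤ)) / (A:ℤ) = 0 :=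
      Int.ediv_eq_zero_of_lt (by positivity) (by exact_mod_cast ZMod.val_lt i)
    simp only [e1, mul_zero, sub_zero]
    have e2 : ((j.val : ℤ)) / (D:ℤ) = 0 :=
      Int.ediv_eq_zero_of_lt (by positivity) (by exact_mod_cast ZMod.val_lt j)
    simp only [e2, mul_zero, sub_zero]
    push_cast
    simp [ZMod.natCast_val, ZMod.cast_id]
  rw [AddSubgroup.index_eq_card, Nat.card_congr (Equiv.ofBijective F ⟨hinj, hsurj⟩)]
  simp [Nat.card_zmod, mul_assoc]


lemma tuple_eq {p : ℤ × ℤ × ℤ} {u v w : ℤ} (h1 : p.1 = u) (h2 : p.2.1 = v) (h3 : p.2.2 = w) :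
    p = (u, v, w) := by
  rw [Prod.ext_iff, Prod.ext_iff]
  exact ⟨h1, h2, h3⟩

lemma classify {n : ℕ} (hn : 0 < n) (H : AddSubgroup (ℤ × ℤ × ℤ))
    (hidx : H.index = n) (hmap : H.map ell3 = H) :
    ∃ a d c b w1 w2 : ℕ, 0 < a ∧ 0 < d ∧ 0 < c ∧ a * d * c = n ∧
      b < d ∧ w1 < c ∧ (c:ℤ) ∣ 2*(w1:ℤ) ∧ w2 < c ∧ (c:ℤ) ∣ 2*(w2:ℤ) ∧
      Delta (a:ℤ) (b:ℤ) (w1:ℤ) (d:ℤ) (w2:ℤ) (c:ℤ) = H := by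
  classical
  have hz : ∀ (k : ℤ) (p : ℤ × ℤ × ℤ), p ∈ H → k • p ∈ H :=
    fun k p hp => AddSubgroup.zsmul_mem H hp k
  have hsm : ∀ p : ℤ × ℤ × ℤ, (n:ℤ) • p ∈ H := by
    intro p
    have h1 : H.index • p ∈ H := AddSubgroup.nsmul_index_mem H p
    rw [hidx] at h1
    have : (n:ℤ) • p = (n:ℕ) • p := natCast_zsmul p n
    rwa [this]
  -- existence of positive elements
  have hc3 : ∃ k : ℕ, 0 < k ∧ ((0:ℤ), (0:ℤ), (k:ℤ)) ∈ H := by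
    refine ⟨n, hn, ?_⟩
    have := hsm (0, 0, 1)
    have he : (n:ℤ) • ((0:ℤ), (0:ℤ), (1:ℤ)) = ((0:ℤ), (0:ℤ), (n:ℤ)) := by
      rw [Prod.smul_mk, Prod.smul_mk]; simp
    rwa [he] at this
  have ha3 : ∃ k : ℕ, 0 < k ∧ ∃ v w : ℤ, ((k:ℤ), v, w) ∈ H := by
    refine ⟨n, hn, 0, 0, ?_⟩
    have := hsm (1, 0, 0)
    have he : (n:ℤ) • ((1:ℤ), (0:ℤ), (0:ℤ)) = ((n:ℤ), (0:ℤ), (0:ℤ)) := by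
      rw [Prod.smul_mk, Prod.smul_mk]; simp
    rwa [he] at this
  have hd3 : ∃ k : ℕ, 0 < k ∧ ∃ w : ℤ, ((0:ℤ), (k:ℤ), w) ∈ H := by
    refine ⟨n, hn, 0, ?_⟩
    have := hsm (0, 1, 0)
    have he : (n:ℤ) • ((0:ℤ), (1:ℤ), (0:ℤ)) = ((0:ℤ), (n:ℤ), (0:ℤ)) := by
      rw [Prod.smul_mk, Prod.smul_mk]; simp
    rwa [he] at this
  set c := Nat.find hc3 with hcdef
  obtain ⟨hc0, hcH⟩ := Nat.find_spec hc3
  set a := Nat.find ha3 with hadef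
  obtain ⟨ha0, v1, ω1, haH⟩ := Nat.find_spec ha3
  set d := Nat.find hd3 with hddef
  obtain ⟨hd0, ω2, hdH⟩ := Nat.find_spec hd3
  have hc0' : (0:ℤ) < c := by exact_mod_cast hc0
  have hd0' : (0:ℤ) < d := by exact_mod_cast hd0
  have ha0' : (0:ℤ) < a := by exact_mod_cast ha0
  -- divisibility lemmas
  have hdvd3 : ∀ w : ℤ, ((0:ℤ), (0:ℤ), w) ∈ H → (c:ℤ) ∣ w := by
    intro w hw
    have hr : ((0:ℤ), (0:ℤ), w % (c:ℤ)) ∈ H := by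
      have hmem := H.sub_mem hw (hz (w / (c:ℤ)) _ hcH)
      have he : ((0:ℤ), (0:ℤ), w) - (w / (c:ℤ)) • ((0:ℤ), (0:ℤ), (c:ℤ))
          = ((0:ℤ), (0:ℤ), w % (c:ℤ)) := by
        rw [Prod.smul_mk, Prod.smul_mk, Prod.mk_sub_mk, Prod.mk_sub_mk]
        refine tuple_eq ?_ ?_ ?_ <;> simp [Int.emod_def, smul_eq_mul] <;> ring
      rwa [he] at hmem
    by_contra hnd
    have hne : w % (c:ℤ) ≠ 0 := fun h0 => hnd (Int.dvd_of_emod_eq_zero h0)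
    have hlt : w % (c:ℤ) < c := Int.emod_lt_of_pos w hc0'
    have hge : (0:ℤ) ≤ w % (c:ℤ) := Int.emod_nonneg w hc0'.ne'
    set r := (w % (c:ℤ)).toNat with hrdef
    have hr' : ((0:ℤ), (0:ℤ), (r:ℤ)) ∈ H := by
      rwa [hrdef, Int.toNat_of_nonneg hge]
    have hrc : r < c := by omega
    exact Nat.find_min hc3 hrc ⟨by omega, hr'⟩
  have hdvd2 : ∀ v w : ℤ, ((0:ℤ), v, w) ∈ H → (d:ℤ) ∣ v := by
    intro v w hw
    have hr : ((0:ℤ), v % (d:ℤ), w - (v / (d:ℤ)) * ω2) ∈ H := by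
      have hmem := H.sub_mem hw (hz (v / (d:ℤ)) _ hdH)
      have he : ((0:ℤ), v, w) - (v / (d:ℤ)) • ((0:ℤ), (d:ℤ), ω2)
          = ((0:ℤ), v % (d:ℤ), w - (v / (d:ℤ)) * ω2) := by
        rw [Prod.smul_mk, Prod.smul_mk, Prod.mk_sub_mk, Prod.mk_sub_mk]
        refine tuple_eq ?_ ?_ ?_ <;> simp [Int.emod_def, smul_eq_mul] <;> ring
      rwa [he] at hmem
    by_contra hnd
    have hne : v % (d:ℤ) ≠ 0 := fun h0 => hnd (Int.dvd_of_emod_eq_zero h0)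
    have hlt : v % (d:ℤ) < d := Int.emod_lt_of_pos v hd0'
    have hge : (0:ℤ) ≤ v % (d:ℤ) := Int.emod_nonneg v hd0'.ne'
    set r := (v % (d:ℤ)).toNat with hrdef
    have hr' : ((0:ℤ), (r:ℤ), w - (v / (d:ℤ)) * ω2) ∈ H := by
      rw [hrdef, Int.toNat_of_nonneg hge]; exact hr
    have hrc : r < d := by omega
    exact Nat.find_min hd3 hrc ⟨by omega, _, hr'⟩
  have hdvd1 : ∀ p : ℤ × ℤ × ℤ, p ∈ H → (a:ℤ) ∣ p.1 := by
    rintro ⟨u, v, w⟩ hw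
    have hr : (u % (a:ℤ), v - (u / (a:ℤ)) * v1, w - (u / (a:ℤ)) * ω1) ∈ H := by
      have hmem := H.sub_mem hw (hz (u / (a:ℤ)) _ haH)
      have he : ((u:ℤ), v, w) - (u / (a:ℤ)) • ((a:ℤ), v1, ω1)
          = (u % (a:ℤ), v - (u / (a:ℤ)) * v1, w - (u / (a:ℤ)) * ω1) := by
        rw [Prod.smul_mk, Prod.smul_mk, Prod.mk_sub_mk, Prod.mk_sub_mk]
        refine tuple_eq ?_ ?_ ?_ <;> simp [Int.emod_def, smul_eq_mul] <;> ring
      rwa [he] at hmem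
    by_contra hnd
    have hne : u % (a:ℤ) ≠ 0 := fun h0 => hnd (Int.dvd_of_emod_eq_zero h0)
    have hlt : u % (a:ℤ) < a := Int.emod_lt_of_pos u ha0'
    have hge : (0:ℤ) ≤ u % (a:ℤ) := Int.emod_nonneg u ha0'.ne'
    set r := (u % (a:ℤ)).toNat with hrdef
    have hr' : ((r:ℤ), v - (u / (a:ℤ)) * v1, w - (u / (a:ℤ)) * ω1) ∈ H := by
      rw [hrdef, Int.toNat_of_nonneg hge]; exact hr
    have hrc : r < a := by omega
    exact Nat.find_min ha3 hrc ⟨by omega, _, _, hr'⟩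
  -- reduced generator g2
  have hg2a : ((0:ℤ), (d:ℤ), ω2 % (c:ℤ)) ∈ H := by
    have hmem := H.sub_mem hdH (hz (ω2 / (c:ℤ)) _ hcH)
    have he : ((0:ℤ), (d:ℤ), ω2) - (ω2 / (c:ℤ)) • ((0:ℤ), (0:ℤ), (c:ℤ))
        = ((0:ℤ), (d:ℤ), ω2 % (c:ℤ)) := by
      rw [Prod.smul_mk, Prod.smul_mk, Prod.mk_sub_mk, Prod.mk_sub_mk]
      refine tuple_eq ?_ ?_ ?_ <;> simp [Int.emod_def, smul_eq_mul] <;> ring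
    rwa [he] at hmem
  set W2 : ℕ := (ω2 % (c:ℤ)).toNat with hW2def
  have hW2ge : (0:ℤ) ≤ ω2 % (c:ℤ) := Int.emod_nonneg ω2 hc0'.ne'
  have hW2lt' : ω2 % (c:ℤ) < c := Int.emod_lt_of_pos ω2 hc0'
  have hW2cast : (W2:ℤ) = ω2 % (c:ℤ) := Int.toNat_of_nonneg hW2ge
  have hg2 : ((0:ℤ), (d:ℤ), (W2:ℤ)) ∈ H := by rw [hW2cast]; exact hg2a
  have hW2lt : W2 < c := by omega
  have hdvdW2 : (c:ℤ) ∣ 2*(W2:ℤ) := by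
    have hL := ell3_mem hmap hg2
    simp only at hL
    have := H.sub_mem hg2 hL
    have he : ((0:ℤ), (d:ℤ), (W2:ℤ)) - ((0:ℤ), (d:ℤ), -(W2:ℤ)) = ((0:ℤ), (0:ℤ), 2*(W2:ℤ)) := by
      rw [Prod.mk_sub_mk, Prod.mk_sub_mk]
      refine tuple_eq ?_ ?_ ?_ <;> simp <;> ring
    rw [he] at this
    exact hdvd3 _ this
  -- reduced generator g1
  have hg1a : ((a:ℤ), v1 % (d:ℤ), ω1 - (v1 / (d:ℤ)) * (W2:ℤ)) ∈ H := by
    have hmem := H.sub_mem haH (hz (v1 / (d:ℤ)) _ hg2)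
    have he : ((a:ℤ), v1, ω1) - (v1 / (d:ℤ)) • ((0:ℤ), (d:ℤ), (W2:ℤ))
        = ((a:ℤ), v1 % (d:ℤ), ω1 - (v1 / (d:ℤ)) * (W2:ℤ)) := by
      rw [Prod.smul_mk, Prod.smul_mk, Prod.mk_sub_mk, Prod.mk_sub_mk]
      refine tuple_eq ?_ ?_ ?_ <;> simp [Int.emod_def, smul_eq_mul] <;> ring
    rwa [he] at hmem
  set B : ℕ := (v1 % (d:ℤ)).toNat with hBdef
  have hBge : (0:ℤ) ≤ v1 % (d:ℤ) := Int.emod_nonneg v1 hd0'.ne'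
  have hBlt' : v1 % (d:ℤ) < d := Int.emod_lt_of_pos v1 hd0'
  have hBcast : (B:ℤ) = v1 % (d:ℤ) := Int.toNat_of_nonneg hBge
  have hBlt : B < d := by omega
  set ω1' := ω1 - (v1 / (d:ℤ)) * (W2:ℤ) with hω1'def
  have hg1b : ((a:ℤ), (B:ℤ), ω1' % (c:ℤ)) ∈ H := by
    have hmem := H.sub_mem hg1a (hz (ω1' / (c:ℤ)) _ hcH)
    have he : ((a:ℤ), v1 % (d:ℤ), ω1') - (ω1' / (c:ℤ)) • ((0:ℤ), (0:ℤ), (c:ℤ))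
        = ((a:ℤ), (B:ℤ), ω1' % (c:ℤ)) := by
      rw [Prod.smul_mk, Prod.smul_mk, Prod.mk_sub_mk, Prod.mk_sub_mk]
      refine tuple_eq ?_ ?_ ?_ <;> simp [Int.emod_def, smul_eq_mul, hBcast] <;> ring
    rwa [he] at hmem
  set W1 : ℕ := (ω1' % (c:ℤ)).toNat with hW1def
  have hW1ge : (0:ℤ) ≤ ω1' % (c:ℤ) := Int.emod_nonneg ω1' hc0'.ne'
  have hW1lt' : ω1' % (c:ℤ) < c := Int.emod_lt_of_pos ω1' hc0'
  have hW1cast : (W1:ℤ) = ω1' % (c:ℤ) := Int.toNat_of_nonneg hW1ge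
  have hg1 : ((a:ℤ), (B:ℤ), (W1:ℤ)) ∈ H := by rw [hW1cast]; exact hg1b
  have hW1lt : W1 < c := by omega
  have hdvdW1 : (c:ℤ) ∣ 2*(W1:ℤ) := by
    have hL := ell3_mem hmap hg1
    simp only at hL
    have := H.sub_mem hg1 hL
    have he : ((a:ℤ), (B:ℤ), (W1:ℤ)) - ((a:ℤ), (B:ℤ), -(W1:ℤ)) = ((0:ℤ), (0:ℤ), 2*(W1:ℤ)) := by
      rw [Prod.mk_sub_mk, Prod.mk_sub_mk]
      refine tuple_eq ?_ ?_ ?_ <;> simp <;> ring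
    rw [he] at this
    exact hdvd3 _ this
  -- H = Delta
  have hHD : Delta (a:ℤ) (B:ℤ) (W1:ℤ) (d:ℤ) (W2:ℤ) (c:ℤ) = H := by
    apply le_antisymm
    · rintro p ⟨x, y, z, h1, h2, h3⟩
      have he : p = x • ((a:ℤ), (B:ℤ), (W1:ℤ)) + y • ((0:ℤ), (d:ℤ), (W2:ℤ))
          + z • ((0:ℤ), (0:ℤ), (c:ℤ)) := by
        rw [Prod.smul_mk, Prod.smul_mk, Prod.smul_mk, Prod.smul_mk, Prod.smul_mk, Prod.smul_mk]
        refine tuple_eq ?_ ?_ ?_ <;>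
          simp only [Prod.fst_add, Prod.snd_add, smul_eq_mul, h1, h2, h3] <;> ring
      rw [he]
      exact H.add_mem (H.add_mem (hz x _ hg1) (hz y _ hg2)) (hz z _ hcH)
    · intro p hp
      obtain ⟨x, hx⟩ := hdvd1 p hp
      have h2' : ((0:ℤ), p.2.1 - x*(B:ℤ), p.2.2 - x*(W1:ℤ)) ∈ H := by
        have hmem := H.sub_mem hp (hz x _ hg1)
        have he : p - x • ((a:ℤ), (B:ℤ), (W1:ℤ))
            = ((0:ℤ), p.2.1 - x*(B:ℤ), p.2.2 - x*(W1:ℤ)) := by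
          refine tuple_eq ?_ ?_ ?_
          · show p.1 - x * (a:ℤ) = 0
            linear_combination hx
          · show p.2.1 - x * (B:ℤ) = p.2.1 - x * (B:ℤ)
            rfl
          · show p.2.2 - x * (W1:ℤ) = p.2.2 - x * (W1:ℤ)
            rfl
        rwa [he] at hmem
      obtain ⟨y, hy⟩ := hdvd2 _ _ h2'
      have h3' : ((0:ℤ), (0:ℤ), p.2.2 - x*(W1:ℤ) - y*(W2:ℤ)) ∈ H := by
        have hmem := H.sub_mem h2' (hz y _ hg2)
        have he : ((0:ℤ), p.2.1 - x*(B:ℤ), p.2.2 - x*(W1:ℤ)) - y • ((0:ℤ), (d:ℤ), (W2:ℤ))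
            = ((0:ℤ), (0:ℤ), p.2.2 - x*(W1:ℤ) - y*(W2:ℤ)) := by
          refine tuple_eq ?_ ?_ ?_
          · show (0:ℤ) - y * 0 = 0
            ring
          · show p.2.1 - x * (B:ℤ) - y * (d:ℤ) = 0
            linear_combination hy
          · show p.2.2 - x * (W1:ℤ) - y * (W2:ℤ) = p.2.2 - x * (W1:ℤ) - y * (W2:ℤ)
            rfl
        rwa [he] at hmem
      obtain ⟨z, hzz⟩ := hdvd3 _ h3'
      exact ⟨x, y, z, by rw [hx]; ring, by linear_combination hy, by linear_combination hzz⟩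
  -- index
  have hprod : a * d * c = n := by
    rw [← hidx, ← hHD]
    exact (Delta_index a d c ha0 hd0 hc0 _ _ _).symm
  exact ⟨a, d, c, B, W1, W2, ha0, hd0, hc0, hprod, hBlt, hW1lt, hdvdW1, hW2lt, hdvdW2, hHD⟩

def Tset (n : ℕ) : Finset (ℕ × ℕ × ℕ) :=
  (Finset.range (n+1) ×ˢ Finset.range (n+1) ×ˢ Finset.range (n+1)).filter
      (fun t => 0 < t.1 ∧ 0 < t.2.1 ∧ 0 < t.2.2 ∧ t.1 * t.2.1 * t.2.2 = n)

lemma sigma2_eq (n : ℕ) : sigma2 n = ∑ t ∈ Tset n, t.1 := rfl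

def Pset (n : ℕ) : Finset (ℕ × ℕ × ℕ × ℕ × ℕ × ℕ) :=
  (range (n+1) ×ˢ range (n+1) ×ˢ range (n+1) ×ˢ range (n+1) ×ˢ range (n+1) ×ˢ range (n+1)).filter
    fun t => t.1 * t.2.1 * t.2.2.1 = n ∧ t.2.2.2.1 < t.2.1 ∧
      t.2.2.2.2.1 < t.2.2.1 ∧ t.2.2.1 ∣ 2*t.2.2.2.2.1 ∧
      t.2.2.2.2.2 < t.2.2.1 ∧ t.2.2.1 ∣ 2*t.2.2.2.2.2

def Wc (c : ℕ) : Finset ℕ := (range c).filter (fun w => c ∣ 2*w)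

lemma Wc_card {c : ℕ} (hc : 0 < c) : (Wc c).card = if 2 ∣ c then 2 else 1 := by
  by_cases h : 2 ∣ c
  · obtain ⟨c', rfl⟩ := h
    have hc' : 0 < c' := by omega
    have : Wc (2*c') = {0, c'} := by
      ext w
      simp only [Wc, mem_filter, mem_range, mem_insert, mem_singleton]
      constructor
      · rintro ⟨hw, k, hk⟩
        rw [mul_assoc] at hk
        have hw' : w = c' * k := Nat.eq_of_mul_eq_mul_left (by norm_num) hk
        have hk2 : k < 2 := by
          by_contra hcon
          push_neg at hcon
          have : c' * 2 ≤ c' * k := Nat.mul_le_mul_left _ hcon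
          omega
        interval_cases k <;> omega
      · rintro (rfl | rfl)
        · exact ⟨by omega, ⟨0, by ring⟩⟩
        · exact ⟨by omega, ⟨1, by ring⟩⟩
    rw [this, if_pos ⟨c', rfl⟩]
    exact card_pair (by omega)
  · have : Wc c = {0} := by
      ext w
      simp only [Wc, mem_filter, mem_range, mem_singleton]
      constructor
      · rintro ⟨hw, k, hk⟩
        have h2k : 2 ∣ k := by
          rcases (Nat.prime_two.dvd_mul).mp ⟨w, hk.symm⟩ with h' | h'
          · exact absurd h' h
          · exact h'
        obtain ⟨k', rfl⟩ := h2k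
        have hw' : w = c * k' := by
          have : 2 * w = 2 * (c * k') := by rw [hk]; ring
          exact Nat.eq_of_mul_eq_mul_left (by norm_num) this
        rcases Nat.eq_zero_or_pos k' with rfl | hk'
        · omega
        · have : c ≤ c * k' := Nat.le_mul_of_pos_right _ hk'
          omega
      · rintro rfl
        exact ⟨hc, ⟨0, by ring⟩⟩
    rw [this, if_neg h, card_singleton]

lemma sum_T_snd (n : ℕ) : ∑ t ∈ Tset n, t.2.1 = sigma2 n := by
  rw [sigma2_eq]
  refine sum_nbij' (fun t => (t.2.1, t.1, t.2.2)) (fun t => (t.2.1, t.1, t.2.2)) ?_ ?_ ?_ ?_ ?_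
  · rintro ⟨a, d, c⟩ ht
    simp only [Tset, mem_filter, mem_product, mem_range] at ht ⊢
    refine ⟨⟨ht.1.2.1, ht.1.1, ht.1.2.2⟩, ht.2.2.1, ht.2.1, ht.2.2.2.1, ?_⟩
    rw [← ht.2.2.2.2]; ring
  · rintro ⟨a, d, c⟩ ht
    simp only [Tset, mem_filter, mem_product, mem_range] at ht ⊢
    refine ⟨⟨ht.1.2.1, ht.1.1, ht.1.2.2⟩, ht.2.2.1, ht.2.1, ht.2.2.2.1, ?_⟩
    rw [← ht.2.2.2.2]; ring
  · rintro ⟨a, d, c⟩ _; rfl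
  · rintro ⟨a, d, c⟩ _; rfl
  · rintro ⟨a, d, c⟩ _; rfl

lemma sum_T_half (n : ℕ) (hn : 0 < n) (h2 : 2 ∣ n) :
    ∑ t ∈ (Tset n).filter (fun t => 2 ∣ t.2.2), t.2.1 = sigma2 (n/2) := by
  rw [← sum_T_snd]
  refine sum_nbij' (fun t => (t.1, t.2.1, t.2.2/2)) (fun t => (t.1, t.2.1, 2*t.2.2)) ?_ ?_ ?_ ?_ ?_
  · rintro ⟨a, d, c⟩ ht
    simp only [Tset, mem_filter, mem_product, mem_range] at ht ⊢
    obtain ⟨⟨⟨ha, hd, hc⟩, ha0, hd0, hc0, hprod⟩, hcd⟩ := ht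
    obtain ⟨c', rfl⟩ := hcd
    have hkey : a * d * c' = n / 2 := by
      have : n = (a * d * c') * 2 := by rw [← hprod]; ring
      omega
    have hc' : 0 < c' := by omega
    have hle : n / 2 ≤ n := Nat.div_le_self _ _
    rw [show 2 * c' / 2 = c' from by omega]
    refine ⟨⟨?_, ?_, ?_⟩, ha0, hd0, hc', hkey⟩
    · have : a ≤ n / 2 := Nat.le_of_dvd (by omega) ⟨d * c', by rw [← hkey]; ring⟩
      omega
    · have : d ≤ n / 2 := Nat.le_of_dvd (by omega) ⟨a * c', by rw [← hkey]; ring⟩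
      omega
    · have : c' ≤ n / 2 := Nat.le_of_dvd (by omega) ⟨a * d, by rw [← hkey]; ring⟩
      omega
  · rintro ⟨a, d, c⟩ ht
    simp only [Tset, mem_filter, mem_product, mem_range] at ht ⊢
    obtain ⟨⟨ha, hd, hc⟩, ha0, hd0, hc0, hprod⟩ := ht
    have hkey : a * d * (2*c) = n := by
      have : n = 2 * (n/2) := by omega
      rw [this, ← hprod]; ring
    refine ⟨⟨⟨?_, ?_, ?_⟩, ha0, hd0, by omega, hkey⟩, ⟨c, rfl⟩⟩
    · have : a ≤ n := Nat.le_of_dvd hn ⟨d * (2*c), by rw [← hkey]; ring⟩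
      omega
    · have : d ≤ n := Nat.le_of_dvd hn ⟨a * (2*c), by rw [← hkey]; ring⟩
      omega
    · have : 2*c ≤ n := Nat.le_of_dvd hn ⟨a * d, by rw [← hkey]; ring⟩
      omega
  · rintro ⟨a, d, c⟩ ht
    have hdvd : 2 ∣ c := (mem_filter.mp ht).2
    show ((a:ℕ), d, 2*(c/2)) = (a, d, c)
    simp only [Prod.mk.injEq, true_and]
    omega
  · rintro ⟨a, d, c⟩ _
    show ((a:ℕ), d, 2*c/2) = (a, d, c)
    simp only [Prod.mk.injEq, true_and]
    omega
  · rintro ⟨a, d, c⟩ _; rfl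

lemma Pset_card (n : ℕ) (hn : 0 < n) :
    (Pset n).card = sigma2 n + 3 * (if 2 ∣ n then sigma2 (n / 2) else 0) := by
  have hfib : (Pset n).card = ∑ t ∈ Tset n,
      ((Pset n).filter (fun u => (u.1, u.2.1, u.2.2.1) = t)).card := by
    refine card_eq_sum_card_fiberwise ?_
    rintro ⟨a, d, c, b, w1, w2⟩ hu
    simp only [Finset.mem_coe, Pset, mem_filter, mem_product, mem_range] at hu
    obtain ⟨⟨ha, hd, hc, _⟩, hprod, _⟩ := hu
    simp only [Finset.mem_coe, Tset, mem_filter, mem_product, mem_range]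
    have ha0 : 0 < a := by rcases Nat.eq_zero_or_pos a with rfl | h; · simp at hprod; omega
                           · exact h
    have hd0 : 0 < d := by rcases Nat.eq_zero_or_pos d with rfl | h; · simp at hprod; omega
                           · exact h
    have hc0 : 0 < c := by rcases Nat.eq_zero_or_pos c with rfl | h; · simp at hprod; omega
                           · exact h
    exact ⟨⟨ha, hd, hc⟩, ha0, hd0, hc0, hprod⟩
  have hfibcard : ∀ t ∈ Tset n, ((Pset n).filter (fun u => (u.1, u.2.1, u.2.2.1) = t)).card
      = t.2.1 * ((Wc t.2.2).card * (Wc t.2.2).card) := by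
    rintro ⟨a, d, c⟩ ht
    simp only [Tset, mem_filter, mem_product, mem_range] at ht
    obtain ⟨⟨ha, hd, hc⟩, ha0, hd0, hc0, hprod⟩ := ht
    rw [show d * ((Wc c).card * (Wc c).card) = ((range d) ×ˢ (Wc c) ×ˢ (Wc c)).card by
      simp [card_product]]
    refine card_nbij' (fun u => (u.2.2.2.1, u.2.2.2.2.1, u.2.2.2.2.2))
      (fun s => (a, d, c, s.1, s.2.1, s.2.2)) ?_ ?_ ?_ ?_
    · rintro ⟨a', d', c', b, w1, w2⟩ hu
      simp only [Finset.mem_coe, mem_filter, Prod.mk.injEq] at hu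
      obtain ⟨hu, rfl, rfl, rfl⟩ := hu
      simp only [Pset, mem_filter, mem_product, mem_range] at hu
      simp only [Finset.mem_coe, mem_product, mem_range, Wc, mem_filter]
      refine ⟨hu.2.2.1, ⟨hu.2.2.2.1, hu.2.2.2.2.1⟩, hu.2.2.2.2.2.1, hu.2.2.2.2.2.2⟩
    · rintro ⟨b, w1, w2⟩ hs
      simp only [Finset.mem_coe, mem_product, mem_range, Wc, mem_filter] at hs
      simp only [Finset.mem_coe, mem_filter, Pset, mem_product, mem_range, Prod.mk.injEq]
      refine ⟨⟨⟨by omega, by omega, by omega, by omega, by omega, by omega⟩,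
        hprod, hs.1, hs.2.1.1, hs.2.1.2, hs.2.2.1, hs.2.2.2⟩, trivial, trivial, trivial⟩
    · rintro ⟨a', d', c', b, w1, w2⟩ hu
      simp only [Finset.mem_coe, mem_filter, Prod.mk.injEq] at hu
      obtain ⟨_, rfl, rfl, rfl⟩ := hu
      rfl
    · rintro ⟨b, w1, w2⟩ _; rfl
  rw [hfib, Finset.sum_congr rfl hfibcard]
  have hpt : ∀ t ∈ Tset n, t.2.1 * ((Wc t.2.2).card * (Wc t.2.2).card)
      = t.2.1 + (if 2 ∣ t.2.2 then 3 * t.2.1 else 0) := by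
    rintro ⟨a, d, c⟩ ht
    simp only [Tset, mem_filter, mem_product, mem_range] at ht
    rw [Wc_card ht.2.2.2.1]
    by_cases h : 2 ∣ c
    · rw [if_pos h, if_pos h]; ring
    · rw [if_neg h, if_neg h]; ring
  rw [Finset.sum_congr rfl hpt, Finset.sum_add_distrib, ← Finset.sum_filter, sum_T_snd]
  congr 1
  rw [← Finset.mul_sum]
  by_cases h2 : 2 ∣ n
  · rw [if_pos h2, sum_T_half n hn h2]
  · rw [if_neg h2, mul_zero, Finset.filter_false_of_mem, Finset.sum_empty, mul_zero]
    rintro ⟨a, d, c⟩ ht hdc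
    simp only [Tset, mem_filter, mem_product, mem_range] at ht
    exact h2 (hdc.trans (ht.2.2.2.2 ▸ Dvd.intro_left (a*d) rfl))

lemma mem_Pset_props {n : ℕ} (hn : 0 < n) {t : ℕ × ℕ × ℕ × ℕ × ℕ × ℕ} (ht : t ∈ Pset n) :
    0 < t.1 ∧ 0 < t.2.1 ∧ 0 < t.2.2.1 ∧ t.1 * t.2.1 * t.2.2.1 = n ∧
    t.2.2.2.1 < t.2.1 ∧ t.2.2.2.2.1 < t.2.2.1 ∧ t.2.2.1 ∣ 2*t.2.2.2.2.1 ∧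
    t.2.2.2.2.2 < t.2.2.1 ∧ t.2.2.1 ∣ 2*t.2.2.2.2.2 := by
  obtain ⟨a, d, c, b, w1, w2⟩ := t
  simp only [Pset, mem_filter, mem_product, mem_range] at ht
  obtain ⟨-, hprod, h⟩ := ht
  refine ⟨?_, ?_, ?_, hprod, h.1, h.2.1, h.2.2.1, h.2.2.2.1, h.2.2.2.2⟩
  · rcases Nat.eq_zero_or_pos a with rfl | h'
    · simp at hprod; omega
    · exact h'
  · rcases Nat.eq_zero_or_pos d with rfl | h'
    · simp at hprod; omega
    · exact h'
  · rcases Nat.eq_zero_or_pos c with rfl | h'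
    · simp at hprod; omega
    · exact h'

theorem stmt5 (n : ℕ) (hn : 0 < n) :
    Nat.card {H : AddSubgroup (ℤ × ℤ × ℤ) // H.index = n ∧ H.map ell3 = H} =
      sigma2 n + 3 * (if 2 ∣ n then sigma2 (n / 2) else 0) := by
  classical
  have key : ∀ t : ℕ × ℕ × ℕ × ℕ × ℕ × ℕ, t ∈ Pset n →
      (Delta (t.1:ℤ) (t.2.2.2.1:ℤ) (t.2.2.2.2.1:ℤ) (t.2.1:ℤ) (t.2.2.2.2.2:ℤ) (t.2.2.1:ℤ)).index = n ∧
      (Delta (t.1:ℤ) (t.2.2.2.1:ℤ) (t.2.2.2.2.1:ℤ) (t.2.1:ℤ) (t.2.2.2.2.2:ℤ) (t.2.2.1:ℤ)).map ell3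
        = Delta (t.1:ℤ) (t.2.2.2.1:ℤ) (t.2.2.2.2.1:ℤ) (t.2.1:ℤ) (t.2.2.2.2.2:ℤ) (t.2.2.1:ℤ) := by
    intro t ht
    obtain ⟨ha, hd, hc, hprod, hb, hw1, hdv1, hw2, hdv2⟩ := mem_Pset_props hn ht
    constructor
    · rw [Delta_index t.1 t.2.1 t.2.2.1 ha hd hc]
      exact hprod
    · apply Delta_map
      · exact_mod_cast Int.natCast_dvd_natCast.mpr hdv1
      · exact_mod_cast Int.natCast_dvd_natCast.mpr hdv2
  set g : {t : ℕ × ℕ × ℕ × ℕ × ℕ × ℕ // t ∈ Pset n} →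
      {H : AddSubgroup (ℤ × ℤ × ℤ) // H.index = n ∧ H.map ell3 = H} :=
    fun t => ⟨Delta (t.1.1:ℤ) (t.1.2.2.2.1:ℤ) (t.1.2.2.2.2.1:ℤ) (t.1.2.1:ℤ)
      (t.1.2.2.2.2.2:ℤ) (t.1.2.2.1:ℤ), (key t.1 t.2).1, (key t.1 t.2).2⟩ with hg
  have hginj : Function.Injective g := by
    rintro ⟨⟨a, d, c, b, w1, w2⟩, ht⟩ ⟨⟨a', d', c', b', w1', w2'⟩, ht'⟩ hEq
    obtain ⟨ha, hd, hc, -, hb, hw1, -, hw2, -⟩ := mem_Pset_props hn ht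
    obtain ⟨ha', hd', hc', -, hb', hw1', -, hw2', -⟩ := mem_Pset_props hn ht'
    have hD : Delta (a:ℤ) (b:ℤ) (w1:ℤ) (d:ℤ) (w2:ℤ) (c:ℤ)
        = Delta (a':ℤ) (b':ℤ) (w1':ℤ) (d':ℤ) (w2':ℤ) (c':ℤ) :=
      congrArg Subtype.val hEq
    obtain ⟨e1, e2, e3, e4, e5, e6⟩ :=
      Delta_inj ha hd hc ha' hd' hc' hb hw1 hw2 hb' hw1' hw2' hD
    apply Subtype.ext
    simp only [Prod.mk.injEq]
    exact ⟨e1, e2, e3, e4, e5, e6⟩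
  have hgsurj : Function.Surjective g := by
    rintro ⟨H, hidx, hmap⟩
    obtain ⟨a, d, c, b, w1, w2, ha, hd, hc, hprod, hb, hw1, hdv1, hw2, hdv2, hHD⟩ :=
      classify hn H hidx hmap
    have htmem : (a, d, c, b, w1, w2) ∈ Pset n := by
      simp only [Pset, mem_filter, mem_product, mem_range]
      have hle1 : a ≤ n := Nat.le_of_dvd hn ⟨d*c, by rw [← hprod]; ring⟩
      have hle2 : d ≤ n := Nat.le_of_dvd hn ⟨a*c, by rw [← hprod]; ring⟩
      have hle3 : c ≤ n := Nat.le_of_dvd hn ⟨a*d, by rw [← hprod]; ring⟩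
      refine ⟨⟨by omega, by omega, by omega, by omega, by omega, by omega⟩,
        hprod, hb, hw1, ?_, hw2, ?_⟩
      · exact_mod_cast hdv1
      · exact_mod_cast hdv2
    exact ⟨⟨(a, d, c, b, w1, w2), htmem⟩, Subtype.ext hHD⟩
  calc Nat.card {H : AddSubgroup (ℤ × ℤ × ℤ) // H.index = n ∧ H.map ell3 = H}
      = Nat.card {t : ℕ × ℕ × ℕ × ℕ × ℕ × ℕ // t ∈ Pset n} :=
        (Nat.card_congr (Equiv.ofBijective g ⟨hginj, hgsurj⟩)).symm
    _ = (Pset n).card := Nat.card_eq_finsetCard _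
    _ = sigma2 n + 3 * (if 2 ∣ n then sigma2 (n / 2) else 0) := Pset_card n hn
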